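/- With the same data as in the row-sum statement, the array (x_{ij}) defines a semistandard filling: for each column position, the multiset of entries obtained by placing x_{ij} copies of letter j in row i yields weakly increasing rows (automatic) and strictly increasing columns; equivalently, for all 1 ≤ i < r and all letters k, the partial sums satisfy ∑_{j ≤ k} x_{i+1,j} ≤ ∑_{j ≤ k-1} x_{i,j}. -/
import Mathlib


/-- The array of the minimal element of `B^{r,s}` of type `A_n^{(1)}`. -/
def xArr (n r : ℕ) (ℓ : ℕ → ℕ) (i j : ℕ) : ℕ :=
  if j = i then ℓ 0 + ∑ α ∈ Finset.Ico i r, ℓ (α + (n + 1 - r))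
  else if i < j ∧ j < i + (n + 1 - r) then ℓ (j - i)
  else if j = i + (n + 1 - r) then ∑ α ∈ Finset.range i, ℓ (α + (n + 1 - r))
  else 0

/-- Semistandardness (strict increase down columns): for all rows `1 ≤ i < r` and all letters
`k`, `∑_{j ≤ k} x_{i+1,j} ≤ ∑_{j ≤ k-1} x_{i,j}`. -/
theorem typeA_minimal_element_semistandard (n r s : ℕ) (hr1 : 1 ≤ r) (hrn : r ≤ n)
    (ℓ : ℕ → ℕ) (hs : ∑ i ∈ Finset.range (n + 1), ℓ i = s) :
    ∀ i k, 1 ≤ i → i < r →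
      ∑ j ∈ Finset.range (k + 1), xArr n r ℓ (i + 1) j ≤
        ∑ j ∈ Finset.range k, xArr n r ℓ i j := by
  intro i k hi1 hir
  have hr' : 1 ≤ n + 1 - r := by omega
  set r' := n + 1 - r with hr'def
  -- pointwise identity
  have key : ∀ j, xArr n r ℓ (i + 1) (j + 1) + (if j = i then ℓ (i + r') else 0)
      = xArr n r ℓ i j + (if j = i + r' then ℓ (i + r') else 0) := by
    intro j
    unfold xArr
    rw [← hr'def]
    by_cases h1 : j = i
    · subst h1
      simp only [if_pos (rfl : j + 1 = j + 1), if_pos (rfl : j = j),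
        if_neg (show ¬ j = j + r' by omega)]
      simp only [eq_self_iff_true, if_true]
      rw [Finset.sum_eq_sum_Ico_succ_bot hir]
      ring
    · by_cases h2 : i < j ∧ j < i + r'
      · simp only [if_neg (show ¬ j + 1 = i + 1 by omega),
          if_pos (show i + 1 < j + 1 ∧ j + 1 < i + 1 + r' by omega),
          if_neg h1, if_pos h2, if_neg (show ¬ j = i + r' by omega)]
        rw [show j + 1 - (i + 1) = j - i from by omega]
      · by_cases h3 : j = i + r'
        · subst h3
          simp only [if_neg (show ¬ i + r' + 1 = i + 1 by omega),
            if_neg (show ¬ (i + 1 < i + r' + 1 ∧ i + r' + 1 < i + 1 + r') by omega),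
            if_pos (show i + r' + 1 = i + 1 + r' by omega),
            if_neg (show ¬ i + r' = i by omega),
            if_neg (show ¬ (i < i + r' ∧ i + r' < i + r') by omega),
            if_pos (rfl : i + r' = i + r')]
          simp only [eq_self_iff_true, if_true]
          rw [Finset.sum_range_succ]
          ring
        · simp only [if_neg h1, if_neg h2, if_neg h3,
            if_neg (show ¬ j + 1 = i + 1 by omega),
            if_neg (show ¬ (i + 1 < j + 1 ∧ j + 1 < i + 1 + r') by omega),
            if_neg (show ¬ j + 1 = i + 1 + r' by omega)]
  have h0 : xArr n r ℓ (i + 1) 0 = 0 := by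
    unfold xArr
    simp only [if_neg (show ¬ (0:ℕ) = i + 1 by omega),
      if_neg (show ¬ (i + 1 < 0 ∧ 0 < i + 1 + (n + 1 - r)) by omega),
      if_neg (show ¬ (0:ℕ) = i + 1 + (n + 1 - r) by omega)]
  rw [Finset.sum_range_succ' (fun j => xArr n r ℓ (i + 1) j) k, h0, add_zero]
  have hsum : ∑ j ∈ Finset.range k, xArr n r ℓ (i + 1) (j + 1)
        + (if i ∈ Finset.range k then ℓ (i + r') else 0)
      = ∑ j ∈ Finset.range k, xArr n r ℓ i j
        + (if i + r' ∈ Finset.range k then ℓ (i + r') else 0) := by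
    rw [← Finset.sum_ite_eq' (Finset.range k) i (fun _ => ℓ (i + r')),
      ← Finset.sum_ite_eq' (Finset.range k) (i + r') (fun _ => ℓ (i + r')),
      ← Finset.sum_add_distrib, ← Finset.sum_add_distrib]
    exact Finset.sum_congr rfl fun j _ => key j
  simp only [Finset.mem_range] at hsum
  by_cases hik : i < k
  · by_cases hirk : i + r' < k
    · rw [if_pos hik, if_pos hirk] at hsum; omega
    · rw [if_pos hik, if_neg hirk] at hsum; omega
  · rw [if_neg hik, if_neg (by omega)] at hsum; omega
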